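/- In the linear order L_X, for every limit ordinal α < ω₁ and every order isomorphism f : L_X → L_Y, one has f((α,0)) = (α,0); moreover α ∈ X if and only if α ∈ Y. -/

import Mathlib

open Ordinal Cardinal

/-- The first uncountable ordinal `ω₁`. -/
noncomputable def omega1' : Ordinal := (Cardinal.aleph 1).ord

/-- The underlying set of the linear order `L_X`. -/
def LX (X : Set Ordinal) : Type 1 :=
  {p : {o : Ordinal // o < omega1'} × ℕ // p.1.1 ∉ X → p.2 = 0}

/-- The order on `L_X`. -/
def LXlt (X : Set Ordinal) : LX X → LX X → Prop := fun p q =>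
  p.1.1.1 < q.1.1.1 ∨
  (p.1.1 = q.1.1 ∧ p.1.2 = 0 ∧ 0 < q.1.2) ∨
  (p.1.1 = q.1.1 ∧ q.1.2 < p.1.2 ∧ 0 < q.1.2)

lemma omega1'_isLimit : Order.IsSuccLimit omega1' := Cardinal.isSuccLimit_ord (Cardinal.aleph0_le_aleph 1)

/-- standard point `(α, 0)` of `L_X` -/
def pt (X : Set Ordinal) (α : Ordinal) (h : α < omega1') : LX X :=
  ⟨(⟨α, h⟩, 0), fun _ => rfl⟩

lemma pt_fst (Z : Set Ordinal) (α : Ordinal) (h : α < omega1') : (pt Z α h).1.1.1 = α := rfl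
lemma pt_snd (Z : Set Ordinal) (α : Ordinal) (h : α < omega1') : (pt Z α h).1.2 = 0 := rfl

/-- "densely approached from below, and has a predecessor" -/
def DB {A : Type*} (r : A → A → Prop) (q : A) : Prop :=
  (∃ p, r p q) ∧ ∀ p, r p q → ∃ t, r p t ∧ r t q

/-- "densely approached from above" -/
def DA {A : Type*} (r : A → A → Prop) (q : A) : Prop :=
  ∀ p, r q p → ∃ t, r q t ∧ r t p

lemma DB_transfer {A B : Type*} {r : A → A → Prop} {s : B → B → Prop}
    (f : r ≃r s) (q : A) : DB s (f q) ↔ DB r q := by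
  constructor
  · rintro ⟨⟨p, hp⟩, hd⟩
    have hp' : r (f.symm p) q := by
      have := f.map_rel_iff (a := f.symm p) (b := q)
      rw [f.apply_symm_apply] at this
      exact this.1 hp
    refine ⟨⟨f.symm p, hp'⟩, fun p' hp' => ?_⟩
    obtain ⟨t, h1, h2⟩ := hd (f p') (f.map_rel_iff.2 hp')
    refine ⟨f.symm t, ?_, ?_⟩
    · have := f.map_rel_iff (a := p') (b := f.symm t)
      rw [f.apply_symm_apply] at this
      exact this.1 h1
    · have := f.map_rel_iff (a := f.symm t) (b := q)
      rw [f.apply_symm_apply] at this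
      exact this.1 h2
  · rintro ⟨⟨p, hp⟩, hd⟩
    refine ⟨⟨f p, f.map_rel_iff.2 hp⟩, fun p' hp' => ?_⟩
    have hp'' : r (f.symm p') q := by
      have := f.map_rel_iff (a := f.symm p') (b := q)
      rw [f.apply_symm_apply] at this
      exact this.1 hp'
    obtain ⟨t, h1, h2⟩ := hd _ hp''
    refine ⟨f t, ?_, f.map_rel_iff.2 h2⟩
    have := f.map_rel_iff (a := f.symm p') (b := t)
    rw [f.apply_symm_apply] at this
    exact this.2 h1

lemma DA_transfer {A B : Type*} {r : A → A → Prop} {s : B → B → Prop}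
    (f : r ≃r s) (q : A) : DA s (f q) ↔ DA r q := by
  constructor
  · intro h p hp
    obtain ⟨t, h1, h2⟩ := h (f p) (f.map_rel_iff.2 hp)
    refine ⟨f.symm t, ?_, ?_⟩
    · have := f.map_rel_iff (a := q) (b := f.symm t)
      rw [f.apply_symm_apply] at this
      exact this.1 h1
    · have := f.map_rel_iff (a := f.symm t) (b := p)
      rw [f.apply_symm_apply] at this
      exact this.1 h2
  · intro h p hp
    have hp' : r q (f.symm p) := by
      have := f.map_rel_iff (a := q) (b := f.symm p)
      rw [f.apply_symm_apply] at this
      exact this.1 hp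
    obtain ⟨t, h1, h2⟩ := h _ hp'
    refine ⟨f t, f.map_rel_iff.2 h1, ?_⟩
    have := f.map_rel_iff (a := t) (b := f.symm p)
    rw [f.apply_symm_apply] at this
    exact this.2 h2

lemma DB_iff (Z : Set Ordinal) (hZ : ∀ o ∈ Z, o < omega1' ∧ Order.IsSuccLimit o)
    (q : LX Z) : DB (LXlt Z) q ↔ q.1.2 = 0 ∧ Order.IsSuccLimit (q.1.1.1) := by
  constructor
  · rintro ⟨⟨p0, hp0⟩, hd⟩
    have hn0 : q.1.2 = 0 := by
      by_contra hn
      have hnpos : 0 < q.1.2 := Nat.pos_of_ne_zero hn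
      have hβZ : q.1.1.1 ∈ Z := by
        by_contra hβ
        exact hn (q.2 hβ)
      -- p = (β, n+1) is an immediate predecessor
      set p : LX Z := ⟨(q.1.1, q.1.2 + 1), fun h => absurd hβZ h⟩ with hp_def
      have hp2 : p.1.2 = q.1.2 + 1 := rfl
      have hpq : LXlt Z p q := Or.inr (Or.inr ⟨rfl, Nat.lt_succ_self _, hnpos⟩)
      obtain ⟨t, h1, h2⟩ := hd p hpq
      -- analyze
      rcases h1 with h1 | ⟨he, h1a, h1b⟩ | ⟨he, h1a, h1b⟩
      · -- β < t.1.1.1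
        rcases h2 with h2 | ⟨he', _, _⟩ | ⟨he', _, _⟩
        · exact absurd (h2.trans h1) (lt_irrefl _)
        · rw [he'] at h1; exact absurd h1 (lt_irrefl _)
        · rw [he'] at h1; exact absurd h1 (lt_irrefl _)
      · omega
      · -- t.1.1 = q.1.1, t.1.2 < n+1, 0 < t.1.2
        rcases h2 with h2 | ⟨he', h2a, h2b⟩ | ⟨he', h2a, h2b⟩
        · rw [← he] at h2; exact absurd h2 (lt_irrefl _)
        · omega
        · omega
    refine ⟨hn0, ?_⟩
    rcases Ordinal.zero_or_succ_or_isSuccLimit q.1.1.1 with h0 | ⟨δ, hδ⟩ | hl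
    · -- β = 0 : contradiction with existence of p0
      exfalso
      rcases hp0 with h | ⟨_, _, h⟩ | ⟨_, _, h⟩
      · rw [h0] at h; exact absurd h (not_lt_of_ge zero_le)
      · omega
      · omega
    · -- β = succ δ : has an immediate predecessor
      exfalso
      have hδ := hδ.symm
      have hδlt : δ < omega1' := lt_trans (by rw [hδ]; exact Order.lt_succ δ) q.1.1.2
      by_cases hδZ : δ ∈ Z
      · set p : LX Z := ⟨(⟨δ, hδlt⟩, 1), fun h => absurd hδZ h⟩ with hp_def
        have hp2 : p.1.2 = 1 := rfl
        have hpq : LXlt Z p q := Or.inl (by rw [hδ]; exact Order.lt_succ δ)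
        obtain ⟨t, h1, h2⟩ := hd p hpq
        have ht_le : t.1.1.1 ≤ δ := by
          rcases h2 with h2 | ⟨he', _, h2b⟩ | ⟨he', _, h2b⟩
          · rw [hδ] at h2; exact Order.lt_succ_iff.1 h2
          · omega
          · omega
        rcases h1 with h1 | ⟨he, h1a, h1b⟩ | ⟨he, h1a, h1b⟩
        · exact absurd h1 (not_lt.2 ht_le)
        · omega
        · omega
      · set p : LX Z := ⟨(⟨δ, hδlt⟩, 0), fun _ => rfl⟩ with hp_def
        have hp2 : p.1.2 = 0 := rfl
        have hpq : LXlt Z p q := Or.inl (by rw [hδ]; exact Order.lt_succ δ)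
        obtain ⟨t, h1, h2⟩ := hd p hpq
        have ht_le : t.1.1.1 ≤ δ := by
          rcases h2 with h2 | ⟨he', _, h2b⟩ | ⟨he', _, h2b⟩
          · rw [hδ] at h2; exact Order.lt_succ_iff.1 h2
          · omega
          · omega
        rcases h1 with h1 | ⟨he, h1a, h1b⟩ | ⟨he, h1a, h1b⟩
        · exact absurd h1 (not_lt.2 ht_le)
        · -- t.1.1 = ⟨δ, _⟩ and 0 < t.1.2, but δ ∉ Z forces t.1.2 = 0
          have : t.1.1.1 = δ := by rw [← he]
          have ht0 : t.1.2 = 0 := t.2 (by rw [this]; exact hδZ)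
          omega
        · omega
    · exact hl
  · rintro ⟨hn0, hlim⟩
    constructor
    · have h0 : (0 : Ordinal) < omega1' := lt_of_lt_of_le hlim.pos (le_of_lt q.1.1.2)
      exact ⟨pt Z 0 h0, Or.inl hlim.pos⟩
    · intro p hp
      have hplt : p.1.1.1 < q.1.1.1 := by
        rcases hp with h | ⟨_, _, h⟩ | ⟨_, _, h⟩
        · exact h
        · omega
        · omega
      have hsucc : Order.succ p.1.1.1 < q.1.1.1 := hlim.succ_lt hplt
      have hs1 : Order.succ p.1.1.1 < omega1' := lt_trans hsucc q.1.1.2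
      exact ⟨pt Z _ hs1, Or.inl (Order.lt_succ _), Or.inl hsucc⟩

lemma DA_iff (Z : Set Ordinal) (α : Ordinal) (hlt : α < omega1') :
    DA (LXlt Z) (pt Z α hlt) ↔ α ∈ Z := by
  have hz : (pt Z α hlt).1.2 = 0 := rfl
  have hzv : (pt Z α hlt).1.1.1 = α := rfl
  constructor
  · intro h
    by_contra hαZ
    have hs : Order.succ α < omega1' := omega1'_isLimit.succ_lt hlt
    have hz2 : (pt Z (Order.succ α) hs).1.2 = 0 := rfl
    obtain ⟨t, h1, h2⟩ := h (pt Z _ hs) (Or.inl (Order.lt_succ α))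
    have htgt : α < t.1.1.1 := by
      rcases h1 with h1 | ⟨he, _, h1b⟩ | ⟨he, h1a, h1b⟩
      · exact h1
      · -- t.1.1.1 = α ∉ Z forces t.1.2 = 0, contradicting 0 < t.1.2
        have hteq : t.1.1.1 = α := (congrArg Subtype.val he).symm
        have := t.2 (by rw [hteq]; exact hαZ)
        omega
      · omega
    rcases h2 with h2 | ⟨he, _, h2b⟩ | ⟨he, h2a, h2b⟩
    · exact absurd htgt (not_lt.2 (Order.lt_succ_iff.1 h2))
    · omega
    · omega
  · intro hαZ p hp
    rcases hp with h | ⟨he, _, hb⟩ | ⟨he, ha, hb⟩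
    · -- α < p.1.1.1 : use (α, 1)
      refine ⟨⟨(⟨α, hlt⟩, 1), fun hc => absurd hαZ hc⟩,
        Or.inr (Or.inl ⟨rfl, rfl, Nat.one_pos⟩), Or.inl h⟩
    · -- same first coordinate, 0 < p.1.2 : use (α, p.1.2 + 1)
      refine ⟨⟨(⟨α, hlt⟩, p.1.2 + 1), fun hc => absurd hαZ hc⟩,
        Or.inr (Or.inl ⟨rfl, rfl, Nat.succ_pos _⟩),
        Or.inr (Or.inr ⟨?_, Nat.lt_succ_self _, hb⟩)⟩
      exact he
    · omega

lemma fix_pt (X Y : Set Ordinal)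
    (hX : ∀ o ∈ X, o < omega1' ∧ Order.IsSuccLimit o)
    (hY : ∀ o ∈ Y, o < omega1' ∧ Order.IsSuccLimit o)
    (f : LXlt X ≃r LXlt Y) :
    ∀ α, ∀ (hlt : α < omega1'), Order.IsSuccLimit α →
      (f (pt X α hlt)).1 = (⟨α, hlt⟩, 0) := by
  intro α
  induction α using Ordinal.induction with
  | h α IH =>
    intro hlt hlim
    set q := f (pt X α hlt) with hq
    have hDBq : DB (LXlt Y) q := (DB_transfer f _).2 ((DB_iff X hX _).2 ⟨rfl, hlim⟩)
    obtain ⟨hn0, hγlim⟩ := (DB_iff Y hY q).1 hDBq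
    rcases lt_trichotomy q.1.1.1 α with hγα | hγα | hγα
    · exfalso
      have hfix := IH q.1.1.1 hγα q.1.1.2 hγlim
      have heq : f (pt X q.1.1.1 q.1.1.2) = q := by
        apply Subtype.ext
        rw [hfix]
        exact (Prod.ext (Subtype.ext rfl).symm hn0.symm)
      have := f.injective heq
      have hqa : q.1.1.1 = α := congrArg (fun (x : LX X) => x.1.1.1) this
      exact absurd hqa (ne_of_lt hγα)
    · exact Prod.ext (Subtype.ext hγα) hn0
    · exfalso
      set y0 : LX Y := pt Y α hlt with hy0
      have h1 : LXlt Y y0 q := Or.inl hγα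
      set p : LX X := f.symm y0 with hp
      have hpq : LXlt X p (pt X α hlt) := by
        have := f.map_rel_iff (a := p) (b := pt X α hlt)
        rw [hp, f.apply_symm_apply] at this
        exact this.1 h1
      have hDBp : DB (LXlt X) p := (DB_transfer f.symm _).2 ((DB_iff Y hY _).2 ⟨rfl, hlim⟩)
      obtain ⟨hp0, hδlim⟩ := (DB_iff X hX p).1 hDBp
      have hptz : (pt X α hlt).1.2 = 0 := rfl
      have hδα : p.1.1.1 < α := by
        rcases hpq with h | ⟨_, _, h⟩ | ⟨_, _, h⟩
        · exact h
        · omega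
        · omega
      have hfix := IH p.1.1.1 hδα p.1.1.2 hδlim
      have hpe : pt X p.1.1.1 p.1.1.2 = p :=
        Subtype.ext (Prod.ext (Subtype.ext rfl).symm hp0.symm)
      have : (f p).1 = (⟨p.1.1.1, p.1.1.2⟩, 0) := by rw [← hpe]; exact hfix
      rw [hp, f.apply_symm_apply, hy0] at this
      have hap : α = p.1.1.1 := congrArg (fun (x : {o : Ordinal // o < omega1'} × ℕ) => x.1.1) this
      exact absurd hap (ne_of_gt hδα)

/-- Any order isomorphism `f : L_X → L_Y` fixes all points `(α,0)` with `α` a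
limit ordinal; moreover `α ∈ X ↔ α ∈ Y` for all such `α`. -/
theorem stmt7 (X Y : Set Ordinal)
    (hX : ∀ o ∈ X, o < omega1' ∧ Order.IsSuccLimit o)
    (hY : ∀ o ∈ Y, o < omega1' ∧ Order.IsSuccLimit o)
    (f : LXlt X ≃r LXlt Y)
    (α : Ordinal) (hlt : α < omega1') (hlim : Order.IsSuccLimit α) :
    (f ⟨(⟨α, hlt⟩, 0), fun _ => rfl⟩).1 = (⟨α, hlt⟩, 0) ∧ (α ∈ X ↔ α ∈ Y) := by
  have hfix : (f (pt X α hlt)).1 = (⟨α, hlt⟩, 0) := fix_pt X Y hX hY f α hlt hlim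
  refine ⟨hfix, ?_⟩
  have hfe : f (pt X α hlt) = pt Y α hlt := Subtype.ext hfix
  calc α ∈ X ↔ DA (LXlt X) (pt X α hlt) := (DA_iff X α hlt).symm
    _ ↔ DA (LXlt Y) (f (pt X α hlt)) := (DA_transfer f _).symm
    _ ↔ DA (LXlt Y) (pt Y α hlt) := by rw [hfe]
    _ ↔ α ∈ Y := DA_iff Y α hlt
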